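/- For every K > 0 there exists N₀ = N₀(K) such that for every integer N > N₀ there exists a constant C (depending on K and N) with the following property: for every sequence (a_n)_{n≥0} of complex numbers with M := sup_{n ≥ 1} |a_n| (n/K)^{n/2} ∨ |a₀| < ∞, the series f(t) = Σ_{n=0}^{∞} a_n f_n(t) converges for every real t, the integral ∫_{−∞}^{∞} |f(t)| p_N(t) dt is finite, and |∫_{−∞}^{∞} f(t) p_N(t) dt| ≤ C · M. -/

import Mathlib

open MeasureTheory Real Filter Finset

/-- Hermite polynomials with parameter `N`. -/
noncomputable def hermN (N k : ℕ) (x : ℝ) : ℝ :=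
  (-1 : ℝ) ^ k * Real.exp (N * x ^ 2 / 2) *
    iteratedDeriv k (fun y : ℝ => Real.exp (-(N * y ^ 2) / 2)) x

/-- Normalized Hermite polynomials. -/
noncomputable def htilde (N k : ℕ) (x : ℝ) : ℝ :=
  hermN N k x / Real.sqrt (k.factorial * N ^ k * Real.sqrt (2 * Real.pi / N))

/-- The mean eigenvalue density of the GUE(N) ensemble. -/
noncomputable def gueDensity (N : ℕ) (t : ℝ) : ℝ :=
  (1 / N) * Real.exp (-(N * t ^ 2) / 2) * ∑ k ∈ Finset.range N, (htilde N k t) ^ 2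

/-- The rescaled Gegenbauer polynomial with parameter 2: `f_n(x) = C_n^{(2)}(x/2)`. -/
noncomputable def gegen (n : ℕ) (x : ℝ) : ℝ :=
  ∑ k ∈ Finset.range (n / 2 + 1),
    (-1 : ℝ) ^ k * (((n - k + 1).factorial : ℝ) / (k.factorial * (n - 2 * k).factorial)) *
      x ^ (n - 2 * k)

lemma gegen_zero (t : ℝ) : gegen 0 t = 1 := by simp [gegen]

lemma choose_le_two_pow' (m k : ℕ) : m.choose k ≤ 2 ^ m := by
  rcases le_or_gt k m with h | h
  · calc m.choose k ≤ ∑ j ∈ Finset.range (m+1), m.choose j :=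
        Finset.single_le_sum (fun i _ => Nat.zero_le _) (Finset.mem_range.2 (Nat.lt_succ_of_le h))
    _ = 2 ^ m := Nat.sum_range_choose m
  · rw [Nat.choose_eq_zero_of_lt h]; exact Nat.zero_le _

lemma abs_gegen_le (n : ℕ) (t : ℝ) :
    |gegen n t| ≤ ((n:ℝ)+2)^2 * 2^n * (1+|t|)^n := by
  have hterm : ∀ k ∈ Finset.range (n/2+1),
      |(-1 : ℝ) ^ k * (((n - k + 1).factorial : ℝ) / (k.factorial * (n - 2 * k).factorial)) *
        t ^ (n - 2 * k)| ≤ ((n:ℝ)+1) * 2^n * (1+|t|)^n := by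
    intro k hk
    have hk' : 2 * k ≤ n := by
      have := Finset.mem_range.1 hk; omega
    have h1 : (n-k).choose k * (k.factorial * (n - 2*k).factorial) = (n-k).factorial := by
      have h2 : k ≤ n - k := by omega
      have h := Nat.choose_mul_factorial_mul_factorial h2
      have h3 : n - k - k = n - 2*k := by omega
      rw [h3] at h
      rw [← h]; ring
    have hfact : (n - k + 1).factorial
        = ((n-k+1) * ((n-k).choose k)) * (k.factorial * (n-2*k).factorial) := by
      rw [Nat.factorial_succ, ← h1]; ring
    have hle : (n - k + 1).factorial ≤ ((n+1) * 2^n) * (k.factorial * (n-2*k).factorial) := by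
      rw [hfact]
      apply Nat.mul_le_mul_right
      exact Nat.mul_le_mul (by omega)
        (le_trans (choose_le_two_pow' _ _) (Nat.pow_le_pow_right (by norm_num) (by omega)))
    have hkpos : (0:ℝ) < (k.factorial : ℝ) * ((n-2*k).factorial : ℝ) := by
      exact mul_pos (by exact_mod_cast Nat.factorial_pos k)
        (by exact_mod_cast Nat.factorial_pos (n-2*k))
    have hco : (((n - k + 1).factorial : ℝ) / ((k.factorial : ℝ) * ((n - 2 * k).factorial : ℝ)))
        ≤ ((n:ℝ)+1) * 2^n := by
      rw [div_le_iff₀ hkpos]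
      calc (((n - k + 1).factorial : ℕ) : ℝ)
          ≤ ((((n+1) * 2^n) * (k.factorial * (n-2*k).factorial) : ℕ) : ℝ) := by
            exact_mod_cast hle
        _ = ((n:ℝ)+1) * 2^n * ((k.factorial : ℝ) * ((n-2*k).factorial : ℝ)) := by
            push_cast; ring
    have h8 : |t| ^ (n - 2*k) ≤ (1+|t|)^n := by
      calc |t| ^ (n-2*k) ≤ (1+|t|) ^ (n-2*k) := by
            apply pow_le_pow_left₀ (abs_nonneg t); linarith
      _ ≤ (1+|t|)^n := by
            apply pow_le_pow_right₀ (by linarith [abs_nonneg t]); omega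
    have hcnn : (0:ℝ) ≤ (((n - k + 1).factorial : ℝ) / ((k.factorial : ℝ) * ((n - 2 * k).factorial : ℝ))) := by positivity
    rw [abs_mul, abs_mul, abs_pow, abs_neg, abs_one, one_pow, one_mul, abs_pow,
      abs_of_nonneg hcnn]
    exact mul_le_mul hco h8 (by positivity) (by positivity)
  calc |gegen n t| ≤ ∑ k ∈ Finset.range (n/2+1),
        |(-1 : ℝ) ^ k * (((n - k + 1).factorial : ℝ) / (k.factorial * (n - 2 * k).factorial)) *
          t ^ (n - 2 * k)| := Finset.abs_sum_le_sum_abs _ _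
  _ ≤ ∑ _k ∈ Finset.range (n/2+1), ((n:ℝ)+1) * 2^n * (1+|t|)^n := Finset.sum_le_sum hterm
  _ = ((n/2+1 : ℕ) : ℝ) * (((n:ℝ)+1) * 2^n * (1+|t|)^n) := by
        rw [Finset.sum_const, nsmul_eq_mul, Finset.card_range]
  _ ≤ ((n:ℝ)+2)^2 * 2^n * (1+|t|)^n := by
        have h9 : ((n/2+1 : ℕ) : ℝ) ≤ (n:ℝ)+2 := by
          have : (n/2+1 : ℕ) ≤ n + 2 := by omega
          exact_mod_cast this
        have h10 : (0:ℝ) ≤ 2^n * (1+|t|)^n := by positivity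
        have h11 := mul_le_mul h9
          (mul_le_mul_of_nonneg_right (by linarith : ((n:ℝ)+1) ≤ (n:ℝ)+2) h10)
          (by positivity) (by positivity : (0:ℝ) ≤ (n:ℝ)+2)
        nlinarith [h11]

lemma pow_le_weight (m : ℕ) {x : ℝ} (hx : 0 ≤ x) : x ^ m ≤ (m:ℝ)^m * Real.exp x := by
  rcases Nat.eq_zero_or_pos m with rfl | hm
  · simpa using Real.one_le_exp hx
  · have hm' : (0:ℝ) < m := by exact_mod_cast hm
    have h1 : x / m ≤ Real.exp (x / m) := by linarith [Real.add_one_le_exp (x/m)]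
    have h2 : (x/m)^m ≤ (Real.exp (x/m))^m := pow_le_pow_left₀ (by positivity) h1 m
    have h3 : (Real.exp (x/m))^m = Real.exp x := by
      rw [← Real.exp_nat_mul]
      congr 1
      field_simp
    calc x^m = (x/m)^m * (m:ℝ)^m := by
          rw [div_pow]; field_simp
      _ ≤ Real.exp x * (m:ℝ)^m := by
          apply mul_le_mul_of_nonneg_right _ (by positivity)
          rw [← h3]; exact h2
      _ = (m:ℝ)^m * Real.exp x := mul_comm _ _

lemma monbound (m : ℕ) (u : ℝ) :
    |u|^m * Real.exp (-(u^2)/8) ≤ 1 + 8^m * (m:ℝ)^m := by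
  have h1 : |u|^m ≤ 1 + (u^2)^m := by
    rcases le_or_gt (|u|) 1 with h | h
    · have h1a : |u|^m ≤ 1 := pow_le_one₀ (abs_nonneg u) h
      have : (0:ℝ) ≤ (u^2)^m := by positivity
      linarith
    · have h2a : |u| ≤ u^2 := by nlinarith [sq_abs u]
      have : |u|^m ≤ (u^2)^m := pow_le_pow_left₀ (abs_nonneg u) h2a m
      linarith
  have h2 : (u^2)^m ≤ 8^m * ((m:ℝ)^m * Real.exp (u^2/8)) := by
    have hw := pow_le_weight m (x := u^2/8) (by positivity)
    calc (u^2)^m = 8^m * (u^2/8)^m := by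
          rw [← mul_pow]; ring_nf
      _ ≤ 8^m * ((m:ℝ)^m * Real.exp (u^2/8)) := by
          apply mul_le_mul_of_nonneg_left hw (by positivity)
  have hE : Real.exp (u^2/8) * Real.exp (-(u^2)/8) = 1 := by
    rw [← Real.exp_add]; ring_nf; exact Real.exp_zero
  have hEpos : (0:ℝ) < Real.exp (-(u^2)/8) := Real.exp_pos _
  have hEle : Real.exp (-(u^2)/8) ≤ 1 := Real.exp_le_one_iff.2 (by nlinarith [sq_nonneg u])
  calc |u|^m * Real.exp (-(u^2)/8) ≤ (1 + (u^2)^m) * Real.exp (-(u^2)/8) := by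
        apply mul_le_mul_of_nonneg_right h1 (le_of_lt hEpos)
    _ ≤ (1 + 8^m * ((m:ℝ)^m * Real.exp (u^2/8))) * Real.exp (-(u^2)/8) := by
        apply mul_le_mul_of_nonneg_right (by linarith) (le_of_lt hEpos)
    _ = Real.exp (-(u^2)/8) + 8^m * (m:ℝ)^m * (Real.exp (u^2/8) * Real.exp (-(u^2)/8)) := by ring
    _ = Real.exp (-(u^2)/8) + 8^m * (m:ℝ)^m := by rw [hE]; ring
    _ ≤ 1 + 8^m * (m:ℝ)^m := by linarith

lemma polybound (p : Polynomial ℝ) :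
    ∃ D : ℝ, 0 ≤ D ∧ ∀ u : ℝ, |p.eval u| * Real.exp (-(u^2)/8) ≤ D := by
  refine ⟨∑ i ∈ Finset.range (p.natDegree + 1), |p.coeff i| * (1 + 8^i * (i:ℝ)^i),
    Finset.sum_nonneg (fun i _ => by positivity), fun u => ?_⟩
  have heval : p.eval u = ∑ i ∈ Finset.range (p.natDegree+1), p.coeff i * u ^ i :=
    Polynomial.eval_eq_sum_range (p := p) u
  calc |p.eval u| * Real.exp (-(u^2)/8)
      ≤ (∑ i ∈ Finset.range (p.natDegree+1), |p.coeff i| * |u|^i) * Real.exp (-(u^2)/8) := by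
        apply mul_le_mul_of_nonneg_right _ (le_of_lt (Real.exp_pos _))
        rw [heval]
        refine le_trans (Finset.abs_sum_le_sum_abs _ _) (le_of_eq ?_)
        apply Finset.sum_congr rfl
        intro i _
        rw [abs_mul, abs_pow]
    _ = ∑ i ∈ Finset.range (p.natDegree+1), |p.coeff i| * (|u|^i * Real.exp (-(u^2)/8)) := by
        rw [Finset.sum_mul]; apply Finset.sum_congr rfl; intro i _; ring
    _ ≤ ∑ i ∈ Finset.range (p.natDegree+1), |p.coeff i| * (1 + 8^i * (i:ℝ)^i) := by
        apply Finset.sum_le_sum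
        intro i _
        exact mul_le_mul_of_nonneg_left (monbound i u) (abs_nonneg _)

lemma sqrt_le_half_add {x y : ℝ} (hx : 0 ≤ x) (hy : 0 ≤ y) :
    Real.sqrt (x*y) ≤ (x+y)/2 := by
  rw [Real.sqrt_mul hx]
  nlinarith [Real.sq_sqrt hx, Real.sq_sqrt hy, sq_nonneg (Real.sqrt x - Real.sqrt y),
    Real.sqrt_nonneg x, Real.sqrt_nonneg y]

lemma hermN_eq (N k : ℕ) (hN : 1 ≤ N) (x : ℝ) :
    hermN N k x = (Real.sqrt N)^k *
      ((Polynomial.hermite k).map (Int.castRingHom ℝ)).eval (Real.sqrt N * x) := by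
  have hN0 : (0:ℝ) ≤ (N:ℝ) := by positivity
  have hsq : (Real.sqrt N)^2 = (N:ℝ) := Real.sq_sqrt hN0
  have hfun : (fun y : ℝ => Real.exp (-(N * y ^ 2) / 2)) =
      (fun y : ℝ => Real.exp (-(y^2/2)) ) ∘ (fun y : ℝ => Real.sqrt N * y) := by
    funext y
    simp only [Function.comp_apply]
    congr 1
    rw [mul_pow, hsq]
    ring
  have hcd : ContDiff ℝ k (fun y : ℝ => Real.exp (-(y^2/2))) := by
    apply Real.contDiff_exp.comp
    exact (((contDiff_id.pow 2).div_const 2).neg)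
  have hiter : iteratedDeriv k (fun y : ℝ => Real.exp (-(N * y ^ 2) / 2)) x
      = (Real.sqrt N)^k * iteratedDeriv k (fun y : ℝ => Real.exp (-(y^2/2))) (Real.sqrt N * x) := by
    rw [hfun]
    have := iteratedDeriv_comp_const_mul hcd (Real.sqrt N)
    exact congrFun this x
  have hgauss : iteratedDeriv k (fun y : ℝ => Real.exp (-(y^2/2))) (Real.sqrt N * x)
      = (-1:ℝ)^k * Polynomial.aeval (Real.sqrt N * x) (Polynomial.hermite k) *
        Real.exp (-((Real.sqrt N * x)^2/2)) := by
    rw [iteratedDeriv_eq_iterate]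
    exact Polynomial.deriv_gaussian_eq_hermite_mul_gaussian k (Real.sqrt N * x)
  have haeval : Polynomial.aeval (Real.sqrt N * x) (Polynomial.hermite k)
      = ((Polynomial.hermite k).map (Int.castRingHom ℝ)).eval (Real.sqrt N * x) := by
    rw [Polynomial.aeval_def, Polynomial.eval_map, Polynomial.eval₂_eq_eval_map,
      Polynomial.eval_map]
    rfl
  have hexp : Real.exp ((N:ℝ) * x^2/2) * Real.exp (-((Real.sqrt N * x)^2/2)) = 1 := by
    rw [← Real.exp_add, mul_pow, hsq]
    ring_nf
    exact Real.exp_zero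
  have hsign : ((-1:ℝ))^(k*2) = 1 := by
    exact Even.neg_one_pow ⟨k, by ring⟩
  rw [hermN, hiter, hgauss, haeval]
  set s := (Real.sqrt N)^k
  set A := ((Polynomial.hermite k).map (Int.castRingHom ℝ)).eval (Real.sqrt N * x)
  set E1 := Real.exp ((N:ℝ) * x^2/2)
  set E2 := Real.exp (-((Real.sqrt N * x)^2/2))
  linear_combination (s * A * ((-1:ℝ)^k * (-1:ℝ)^k)) * hexp + (s * A) * hsign

lemma htilde_continuous (N k : ℕ) (hN : 1 ≤ N) : Continuous (htilde N k) := by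
  have : htilde N k = fun t => ((Real.sqrt N)^k *
      ((Polynomial.hermite k).map (Int.castRingHom ℝ)).eval (Real.sqrt N * t)) /
      Real.sqrt (k.factorial * N ^ k * Real.sqrt (2 * Real.pi / N)) := by
    funext t; rw [htilde, hermN_eq N k hN]
  rw [this]
  apply Continuous.div_const
  exact (continuous_const.mul
    ((Polynomial.continuous _).comp (continuous_const.mul continuous_id)))

lemma htilde_sq_bound (N k : ℕ) (hN : 1 ≤ N) :
    ∃ B : ℝ, 0 ≤ B ∧ ∀ t : ℝ,
      Real.exp (-(N * t^2)/2) * (htilde N k t)^2 ≤ B * Real.exp (-((N:ℝ)/4) * t^2) := by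
  obtain ⟨Dq, hDq0, hDq⟩ := polybound ((Polynomial.hermite k).map (Int.castRingHom ℝ))
  set c := Real.sqrt (k.factorial * N ^ k * Real.sqrt (2 * Real.pi / N)) with hc
  have hNpos : (0:ℝ) < (N:ℝ) := by exact_mod_cast hN
  have hcpos : 0 < c := by
    apply Real.sqrt_pos.2
    have h1 : (0:ℝ) < (k.factorial : ℝ) := by exact_mod_cast Nat.factorial_pos k
    have h2 : (0:ℝ) < ((N:ℕ):ℝ) ^ k := by positivity
    have h3 : (0:ℝ) < Real.sqrt (2 * Real.pi / N) := by
      apply Real.sqrt_pos.2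
      have := Real.pi_pos
      positivity
    positivity
  refine ⟨(Real.sqrt N)^(2*k) * Dq^2 / c^2, by positivity, fun t => ?_⟩
  set u := Real.sqrt N * t with hu
  have hu2 : u^2 = (N:ℝ) * t^2 := by
    rw [hu, mul_pow, Real.sq_sqrt (le_of_lt hNpos)]
  have hsplit : Real.exp (-(N * t^2)/2)
      = Real.exp (-(u^2)/8) * Real.exp (-(u^2)/8) * Real.exp (-((N:ℝ)/4) * t^2) := by
    rw [← Real.exp_add, ← Real.exp_add]
    congr 1
    rw [hu2]; ring
  set q := (Polynomial.hermite k).map (Int.castRingHom ℝ) with hq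
  have hht : htilde N k t = ((Real.sqrt N)^k * q.eval u) / c := by
    rw [htilde, hermN_eq N k hN]
  have key : Real.exp (-(N * t^2)/2) * (htilde N k t)^2
      = (|q.eval u| * Real.exp (-(u^2)/8))^2 * ((Real.sqrt N)^(2*k)/c^2) *
        Real.exp (-((N:ℝ)/4) * t^2) := by
    have habs : ∀ A E : ℝ, (|A| * E)^2 = A^2 * E^2 := by
      intro A E; rw [mul_pow, sq_abs]
    rw [hht, hsplit, habs, div_pow]
    ring
  rw [key]
  have hb : (|q.eval u| * Real.exp (-(u^2)/8))^2 ≤ Dq^2 :=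
    pow_le_pow_left₀ (by positivity) (hDq u) 2
  calc (|q.eval u| * Real.exp (-(u^2)/8))^2 * ((Real.sqrt N)^(2*k)/c^2) *
        Real.exp (-((N:ℝ)/4) * t^2)
      ≤ Dq^2 * ((Real.sqrt N)^(2*k)/c^2) * Real.exp (-((N:ℝ)/4) * t^2) := by
        apply mul_le_mul_of_nonneg_right _ (le_of_lt (Real.exp_pos _))
        apply mul_le_mul_of_nonneg_right hb (by positivity)
    _ = (Real.sqrt N)^(2*k) * Dq^2 / c^2 * Real.exp (-((N:ℝ)/4) * t^2) := by ring

lemma gueDensity_bound (N : ℕ) (hN : 1 ≤ N) :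
    ∃ D : ℝ, 0 ≤ D ∧ Continuous (gueDensity N) ∧ (∀ t, 0 ≤ gueDensity N t) ∧
      ∀ t : ℝ, gueDensity N t ≤ D * Real.exp (-((N:ℝ)/4) * t^2) := by
  have hcont : Continuous (gueDensity N) := by
    apply Continuous.mul
    · apply Continuous.mul continuous_const
      exact Real.continuous_exp.comp (by continuity)
    · exact continuous_finset_sum _ (fun k _ => ((htilde_continuous N k hN).pow 2))
  have hnn : ∀ t, 0 ≤ gueDensity N t := by
    intro t
    apply mul_nonneg
    · apply mul_nonneg (by positivity) (le_of_lt (Real.exp_pos _))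
    · exact Finset.sum_nonneg (fun k _ => sq_nonneg _)
  choose B hB0 hB using fun k => htilde_sq_bound N k hN
  refine ⟨(1/(N:ℝ)) * ∑ k ∈ Finset.range N, B k,
    mul_nonneg (by positivity) (Finset.sum_nonneg fun k _ => hB0 k), hcont, hnn, fun t => ?_⟩
  have : gueDensity N t = (1/(N:ℝ)) * ∑ k ∈ Finset.range N,
      Real.exp (-(N * t^2)/2) * (htilde N k t)^2 := by
    rw [gueDensity, mul_assoc, Finset.mul_sum]
  rw [this]
  calc (1/(N:ℝ)) * ∑ k ∈ Finset.range N, Real.exp (-(N * t^2)/2) * (htilde N k t)^2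
      ≤ (1/(N:ℝ)) * ∑ k ∈ Finset.range N, B k * Real.exp (-((N:ℝ)/4) * t^2) := by
        apply mul_le_mul_of_nonneg_left _ (by positivity)
        exact Finset.sum_le_sum (fun k _ => hB k t)
    _ = (1/(N:ℝ)) * ∑ k ∈ Finset.range N, B k * Real.exp (-((N:ℝ)/4) * t^2) := rfl
    _ = (1/(N:ℝ)) * (∑ k ∈ Finset.range N, B k) * Real.exp (-((N:ℝ)/4) * t^2) := by
        rw [← Finset.sum_mul]; ring

lemma sq_add_two_le (n : ℕ) : ((n:ℝ)+2)^2 ≤ 9 * 2^n := by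
  rcases Nat.eq_zero_or_pos n with rfl | hn
  · norm_num
  · induction n, hn using Nat.le_induction with
    | base => norm_num
    | succ m hm ih =>
        have hm1 : (1:ℝ) ≤ (m:ℝ) := by exact_mod_cast hm
        have h2 : ((m:ℝ)+1+2)^2 ≤ 2 * ((m:ℝ)+2)^2 := by nlinarith
        push_cast
        calc ((m:ℝ)+1+2)^2 ≤ 2 * ((m:ℝ)+2)^2 := h2
          _ ≤ 2 * (9 * 2^m) := by linarith
          _ = 9 * 2^(m+1) := by ring

lemma series_bound (K : ℝ) (hK : 0 < K) (a : ℕ → ℂ) (M : ℝ)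
    (hM0 : ‖a 0‖ ≤ M)
    (hMn : ∀ n : ℕ, 1 ≤ n → ‖a n‖ * ((n : ℝ) / K) ^ ((n : ℝ) / 2) ≤ M)
    (t : ℝ) :
    Summable (fun n : ℕ => a n * (gegen n t : ℂ)) ∧
      ‖∑' n : ℕ, a n * (gegen n t : ℂ)‖ ≤
        14 * M * Real.exp (2*K*(4*(1+|t|))^2) := by
  have hM : 0 ≤ M := le_trans (norm_nonneg _) hM0
  set s : ℝ := 4*(1+|t|) with hs
  have hs0 : 0 < s := by positivity
  set A : ℝ := 2*K*s^2 with hA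
  have hA0 : 0 ≤ A := by positivity
  set bnd : ℕ → ℝ := fun n => (9/2) * M * ((1/2)^n + A^n / n.factorial) with hbnd
  have hsum : Summable bnd := by
    apply Summable.mul_left
    exact (summable_geometric_of_lt_one (by norm_num) (by norm_num)).add
      (Real.summable_pow_div_factorial A)
  have hle : ∀ n, ‖a n * (gegen n t : ℂ)‖ ≤ bnd n := by
    intro n
    rcases Nat.eq_zero_or_pos n with rfl | hn
    · have h0 : ‖a 0 * ((gegen 0 t : ℝ) : ℂ)‖ = ‖a 0‖ := by
        rw [gegen_zero]; simp
      have hb0 : bnd 0 = 9 * M := by simp [hbnd]; ring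
      rw [h0, hb0]; linarith
    · have hn1 : (1:ℝ) ≤ (n:ℝ) := by exact_mod_cast hn
      have hr : (0:ℝ) < ((n:ℝ)/K) ^ ((n:ℝ)/2) := Real.rpow_pos_of_pos (by positivity) _
      have ha : ‖a n‖ ≤ M / ((n:ℝ)/K) ^ ((n:ℝ)/2) := by
        rw [le_div_iff₀ hr]; exact hMn n hn
      have hg : |gegen n t| ≤ 9 * s^n := by
        have h1 := abs_gegen_le n t
        have h2 := sq_add_two_le n
        have h3 : ((n:ℝ)+2)^2 * 2^n * (1+|t|)^n ≤ (9 * 2^n) * 2^n * (1+|t|)^n := by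
          apply mul_le_mul_of_nonneg_right _ (by positivity)
          apply mul_le_mul_of_nonneg_right h2 (by positivity)
        have h4 : (9:ℝ) * 2^n * 2^n * (1+|t|)^n = 9 * s^n := by
          rw [hs, show ((4:ℝ)*(1+|t|)) = 2*(2*(1+|t|)) from by ring, mul_pow, mul_pow]
          ring
        calc |gegen n t| ≤ ((n:ℝ)+2)^2 * 2^n * (1+|t|)^n := h1
          _ ≤ (9 * 2^n) * 2^n * (1+|t|)^n := h3
          _ = 9 * s^n := by rw [← h4]; try ring
      have hinv : (((n:ℝ)/K) ^ ((n:ℝ)/2))⁻¹ = (K/(n:ℝ)) ^ ((n:ℝ)/2) := by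
        rw [← Real.inv_rpow (le_of_lt (by positivity : (0:ℝ) < (n:ℝ)/K)), inv_div]
      have hkey : (K/(n:ℝ)) ^ ((n:ℝ)/2) * s^n ≤ (1/2) * ((1/2)^n + A^n / n.factorial) := by
        have h1 : ((s:ℝ)^2) ^ ((n:ℝ)/2) = s ^ n := by
          rw [← Real.rpow_natCast s 2, ← Real.rpow_mul hs0.le, ← Real.rpow_natCast s n]
          congr 1
          push_cast
          ring
        have h2 : (K/(n:ℝ)) ^ ((n:ℝ)/2) * (s^2)^((n:ℝ)/2) = ((K*s^2)/(n:ℝ)) ^ ((n:ℝ)/2) := by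
          rw [← Real.mul_rpow (by positivity) (by positivity)]
          congr 1; ring
        have h3 : ((K*s^2)/(n:ℝ)) ^ ((n:ℝ)/2) = Real.sqrt (((K*s^2)/(n:ℝ))^n) := by
          rw [Real.sqrt_eq_rpow, ← Real.rpow_natCast ((K*s^2)/(n:ℝ)) n,
            ← Real.rpow_mul (by positivity)]
          congr 1; ring
        have h4 : ((K*s^2)/(n:ℝ))^n ≤ (1/2)^n * (A^n / n.factorial) := by
          have hfac : (n.factorial : ℝ) ≤ (n:ℝ)^n := by exact_mod_cast Nat.factorial_le_pow n
          have hfp : (0:ℝ) < (n.factorial : ℝ) := by exact_mod_cast n.factorial_pos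
          have h5 : (K*s^2)^n = (1/2)^n * A^n := by
            rw [← mul_pow]; congr 1; rw [hA]; ring
          calc ((K*s^2)/(n:ℝ))^n = (K*s^2)^n / (n:ℝ)^n := div_pow _ _ _
            _ ≤ (K*s^2)^n / (n.factorial : ℝ) :=
                div_le_div_of_nonneg_left (by positivity) hfp hfac
            _ = (1/2)^n * (A^n / n.factorial) := by rw [h5]; ring
        calc (K/(n:ℝ)) ^ ((n:ℝ)/2) * s^n = Real.sqrt (((K*s^2)/(n:ℝ))^n) := by
              rw [← h1, h2, h3]
          _ ≤ Real.sqrt ((1/2)^n * (A^n / n.factorial)) := Real.sqrt_le_sqrt h4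
          _ ≤ ((1/2)^n + A^n / n.factorial)/2 := sqrt_le_half_add (by positivity) (by positivity)
          _ = (1/2) * ((1/2)^n + A^n / n.factorial) := by ring
      calc ‖a n * (gegen n t : ℂ)‖ = ‖a n‖ * |gegen n t| := by
            rw [norm_mul, Complex.norm_real, Real.norm_eq_abs]
        _ ≤ (M / ((n:ℝ)/K) ^ ((n:ℝ)/2)) * (9 * s^n) :=
            mul_le_mul ha hg (abs_nonneg _) (by positivity)
        _ = 9 * M * ((K/(n:ℝ)) ^ ((n:ℝ)/2) * s^n) := by
            rw [div_eq_mul_inv, hinv]; ring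
        _ ≤ 9 * M * ((1/2) * ((1/2)^n + A^n / n.factorial)) := by
            apply mul_le_mul_of_nonneg_left hkey (by positivity)
        _ = bnd n := by rw [hbnd]; ring
  have hbsum : ∑' n, bnd n = (9/2)*M*(2 + Real.exp A) := by
    rw [hbnd, tsum_mul_left]
    congr 1
    rw [Summable.tsum_add (summable_geometric_of_lt_one (by norm_num) (by norm_num))
      (Real.summable_pow_div_factorial A)]
    rw [tsum_geometric_of_lt_one (by norm_num) (by norm_num)]
    have hexp : ∑' n:ℕ, A^n / (n.factorial:ℝ) = Real.exp A := by
      rw [Real.exp_eq_exp_ℝ, NormedSpace.exp_eq_tsum_div]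
    rw [hexp]; norm_num
  have hnorm := tsum_of_norm_bounded hsum.hasSum hle
  rw [hbsum] at hnorm
  have hE1 : 1 ≤ Real.exp A := Real.one_le_exp hA0
  refine ⟨Summable.of_norm_bounded hsum hle, ?_⟩
  calc ‖∑' n : ℕ, a n * (gegen n t : ℂ)‖
      = ‖∑' n : ℕ, a n * (gegen n t : ℂ)‖ := rfl
    _ ≤ (9/2)*M*(2 + Real.exp A) := hnorm
    _ ≤ 14*M*Real.exp A := by nlinarith

lemma gegen_continuous (n : ℕ) : Continuous (gegen n) := by
  unfold gegen
  apply continuous_finset_sum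
  intro k _
  exact continuous_const.mul (continuous_pow _)

theorem integral_against_density_bound (K : ℝ) (hK : 0 < K) :
    ∃ N₀ : ℕ, ∀ N : ℕ, N₀ < N → ∃ C : ℝ,
      ∀ (a : ℕ → ℂ) (M : ℝ),
        (‖a 0‖ ≤ M ∧
          ∀ n : ℕ, 1 ≤ n → ‖a n‖ * ((n : ℝ) / K) ^ ((n : ℝ) / 2) ≤ M) →
        (∀ t : ℝ, Summable (fun n : ℕ => a n * (gegen n t : ℂ))) ∧
        Integrable (fun t : ℝ =>
          ‖∑' n : ℕ, a n * (gegen n t : ℂ)‖ * gueDensity N t) ∧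
        ‖∫ t : ℝ, (∑' n : ℕ, a n * (gegen n t : ℂ)) * (gueDensity N t : ℂ)‖ ≤
          C * M := by
  refine ⟨⌈256*K⌉₊, fun N hN => ?_⟩
  have hN1 : 1 ≤ N := by omega
  have hNK : 256*K < (N:ℝ) := by
    calc 256*K ≤ (⌈256*K⌉₊ : ℝ) := Nat.le_ceil _
      _ < (N:ℝ) := by exact_mod_cast hN
  obtain ⟨D, hD0, hDcont, hDnn, hD⟩ := gueDensity_bound N hN1
  set ε : ℝ := (N:ℝ)/4 - 64*K with hε
  have hε0 : 0 < ε := by rw [hε]; linarith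
  refine ⟨14 * D * Real.exp (64*K) * ∫ t : ℝ, Real.exp (-ε * t^2), fun a M hM' => ?_⟩
  obtain ⟨hM0, hMn⟩ := hM'
  have hM : 0 ≤ M := le_trans (norm_nonneg _) hM0
  have hser := fun t => series_bound K hK a M hM0 hMn t
  have hsummable : ∀ t, Summable (fun n : ℕ => a n * (gegen n t : ℂ)) := fun t => (hser t).1
  have hfb : ∀ t : ℝ, ‖∑' n : ℕ, a n * (gegen n t : ℂ)‖
      ≤ 14 * M * Real.exp (64*K) * Real.exp (64*K*t^2) := by
    intro t
    have h1 := (hser t).2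
    have h2 : 2*K*(4*(1+|t|))^2 ≤ 64*K + 64*K*t^2 := by
      have hsq : (1+|t|)^2 ≤ 2 + 2*t^2 := by
        nlinarith [sq_abs t, abs_nonneg t, sq_nonneg (1-|t|)]
      nlinarith [hK.le]
    calc ‖∑' n : ℕ, a n * (gegen n t : ℂ)‖
        ≤ 14*M*Real.exp (2*K*(4*(1+|t|))^2) := h1
      _ ≤ 14*M*Real.exp (64*K + 64*K*t^2) := by
          apply mul_le_mul_of_nonneg_left (Real.exp_le_exp.2 h2) (by positivity)
      _ = 14 * M * Real.exp (64*K) * Real.exp (64*K*t^2) := by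
          rw [Real.exp_add]; ring
  have hmaster : ∀ t : ℝ, ‖∑' n : ℕ, a n * (gegen n t : ℂ)‖ * gueDensity N t
      ≤ M * (14 * D * Real.exp (64*K) * Real.exp (-ε*t^2)) := by
    intro t
    have h3 : ‖∑' n : ℕ, a n * (gegen n t : ℂ)‖ * gueDensity N t
        ≤ (14 * M * Real.exp (64*K) * Real.exp (64*K*t^2)) *
          (D * Real.exp (-((N:ℝ)/4)*t^2)) :=
      mul_le_mul (hfb t) (hD t) (hDnn t) (by positivity)
    have h4 : Real.exp (64*K*t^2) * Real.exp (-((N:ℝ)/4)*t^2) = Real.exp (-ε*t^2) := by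
      rw [← Real.exp_add]; congr 1; rw [hε]; ring
    calc ‖∑' n : ℕ, a n * (gegen n t : ℂ)‖ * gueDensity N t
        ≤ (14 * M * Real.exp (64*K) * Real.exp (64*K*t^2)) *
          (D * Real.exp (-((N:ℝ)/4)*t^2)) := h3
      _ = M * (14 * D * Real.exp (64*K) *
          (Real.exp (64*K*t^2) * Real.exp (-((N:ℝ)/4)*t^2))) := by ring
      _ = M * (14 * D * Real.exp (64*K) * Real.exp (-ε*t^2)) := by rw [h4]
  have hfmeas : Measurable (fun t : ℝ => ∑' n : ℕ, a n * (gegen n t : ℂ)) := by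
    apply measurable_of_tendsto_metrizable' atTop
      (f := fun m : ℕ => fun t : ℝ => ∑ n ∈ Finset.range m, a n * (gegen n t : ℂ))
    · intro m
      apply Continuous.measurable
      apply continuous_finset_sum
      intro n _
      exact continuous_const.mul (Complex.continuous_ofReal.comp (gegen_continuous n))
    · rw [tendsto_pi_nhds]
      intro t
      exact (hsummable t).hasSum.tendsto_sum_nat
  have hGint : Integrable (fun t : ℝ => M * (14 * D * Real.exp (64*K) * Real.exp (-ε*t^2))) := by
    have h := (integrable_exp_neg_mul_sq hε0).const_mul (M * (14 * D * Real.exp (64*K)))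
    have heq : (fun t : ℝ => M * (14 * D * Real.exp (64*K) * Real.exp (-ε*t^2)))
        = fun t : ℝ => (M * (14 * D * Real.exp (64*K))) * Real.exp (-ε*t^2) := by
      funext t; ring
    rw [heq]; exact h
  have hInt : Integrable (fun t : ℝ =>
      ‖∑' n : ℕ, a n * (gegen n t : ℂ)‖ * gueDensity N t) := by
    apply Integrable.mono' hGint
    · exact ((continuous_norm.measurable.comp hfmeas).mul
        hDcont.measurable).aestronglyMeasurable
    · apply ae_of_all
      intro t
      rw [Real.norm_eq_abs, abs_of_nonneg (mul_nonneg (norm_nonneg _) (hDnn t))]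
      exact hmaster t
  refine ⟨hsummable, hInt, ?_⟩
  have hCint : ∫ t : ℝ, M * (14 * D * Real.exp (64*K) * Real.exp (-ε*t^2))
      = (14 * D * Real.exp (64*K) * ∫ t : ℝ, Real.exp (-ε * t^2)) * M := by
    have heq : (fun t : ℝ => M * (14 * D * Real.exp (64*K) * Real.exp (-ε*t^2)))
        = fun t : ℝ => (M * (14 * D * Real.exp (64*K))) * Real.exp (-ε*t^2) := by
      funext t; ring
    rw [heq, MeasureTheory.integral_const_mul]
    ring
  calc ‖∫ t : ℝ, (∑' n : ℕ, a n * (gegen n t : ℂ)) * (gueDensity N t : ℂ)‖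
      = ‖∫ t : ℝ, (∑' n : ℕ, a n * (gegen n t : ℂ)) * (gueDensity N t : ℂ)‖ :=
        rfl
    _ ≤ ∫ t : ℝ, ‖(∑' n : ℕ, a n * (gegen n t : ℂ)) * (gueDensity N t : ℂ)‖ :=
        norm_integral_le_integral_norm _
    _ = ∫ t : ℝ, ‖∑' n : ℕ, a n * (gegen n t : ℂ)‖ * gueDensity N t := by
        apply integral_congr_ae
        apply ae_of_all
        intro t
        show ‖(∑' n : ℕ, a n * (gegen n t : ℂ)) * (gueDensity N t : ℂ)‖
          = ‖∑' n : ℕ, a n * (gegen n t : ℂ)‖ * gueDensity N t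
        rw [norm_mul, Complex.norm_real, Real.norm_eq_abs,
          abs_of_nonneg (hDnn t)]
    _ ≤ ∫ t : ℝ, M * (14 * D * Real.exp (64*K) * Real.exp (-ε*t^2)) :=
        integral_mono hInt hGint (fun t => hmaster t)
    _ = (14 * D * Real.exp (64*K) * ∫ t : ℝ, Real.exp (-ε * t^2)) * M := hCint
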